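/- Let Y be a proper CAT(0) metric space and let μ₁, μ₂ be positive finite Borel measures on Y, both supported on a ball B(y₀,R), each of total mass at least m > 0, and with total variation distance ‖μ₁ − μ₂‖ ≤ ε. Then the centers of mass y_{μ₁} and y_{μ₂} (the unique minimizers of Q_{μᵢ}(y) = ∫ d(y,w)² dμᵢ(w)) satisfy d(y_{μ₁}, y_{μ₂}) ≤ 4εR/m. -/

import Mathlib

open MeasureTheory

open Filter


private lemma mass_le_toReal {Y : Type*} [MeasurableSpace Y] (μ : Measure Y) [IsFiniteMeasure μ]
    {m : ℝ} (hm : 0 ≤ m) (h : ENNReal.ofReal m ≤ μ Set.univ) : m ≤ (μ Set.univ).toReal := by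
  have := ENNReal.toReal_mono (measure_ne_top μ _) h
  rwa [ENNReal.toReal_ofReal hm] at this

private lemma variance_ineq {Y : Type*} [MetricSpace Y] [MeasurableSpace Y]
    (hmid : ∀ y₁ y₂ : Y, ∃ y₃ : Y,
      dist y₁ y₃ = dist y₁ y₂ / 2 ∧ dist y₂ y₃ = dist y₁ y₂ / 2)
    (hmedian : ∀ y y₁ y₂ y₃ : Y,
      dist y₁ y₃ = dist y₁ y₂ / 2 → dist y₂ y₃ = dist y₁ y₂ / 2 →
      (1 / 2) * dist y₁ y₂ ^ 2 ≤ dist y y₁ ^ 2 + dist y y₂ ^ 2 - 2 * dist y y₃ ^ 2)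
    (μ : Measure Y) [IsFiniteMeasure μ]
    {m : ℝ} (hm : 0 ≤ m) (hmass : ENNReal.ofReal m ≤ μ Set.univ)
    (hint : ∀ y : Y, Integrable (fun w => dist y w ^ 2) μ)
    (p : Y) (hp : IsMinOn (fun y => ∫ w, dist y w ^ 2 ∂μ) Set.univ p) (y : Y) :
    m / 2 * dist p y ^ 2 ≤ (∫ w, dist y w ^ 2 ∂μ) - ∫ w, dist p w ^ 2 ∂μ := by
  obtain ⟨c, hc1, hc2⟩ := hmid p y
  have i1 : Integrable (fun w => dist p w ^ 2 + dist y w ^ 2) μ := (hint p).add (hint y)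
  have i2 : Integrable (fun w => 2 * dist c w ^ 2) μ := (hint c).const_mul 2
  have i3 : Integrable (fun w => dist p w ^ 2 + dist y w ^ 2 - 2 * dist c w ^ 2) μ := i1.sub i2
  have key : ∫ _w, ((1:ℝ)/2 * dist p y ^ 2) ∂μ
      ≤ ∫ w, (dist p w ^ 2 + dist y w ^ 2 - 2 * dist c w ^ 2) ∂μ := by
    refine integral_mono (integrable_const _) i3 ?_
    intro w
    have h := hmedian w p y c hc1 hc2
    simpa [dist_comm] using h
  rw [integral_const, smul_eq_mul, integral_sub i1 i2,
    integral_add (hint p) (hint y), integral_const_mul 2 _] at key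
  have hQ : (∫ w, dist p w ^ 2 ∂μ) ≤ ∫ w, dist c w ^ 2 ∂μ := hp (Set.mem_univ c)
  have hμ : m ≤ μ.real Set.univ := mass_le_toReal μ hm hmass
  nlinarith [sq_nonneg (dist p y),
    mul_nonneg (sub_nonneg.mpr hμ) (sq_nonneg (dist p y))]

private lemma center_in_ball {Y : Type*} [MetricSpace Y] [MeasurableSpace Y]
    (hmid : ∀ y₁ y₂ : Y, ∃ y₃ : Y,
      dist y₁ y₃ = dist y₁ y₂ / 2 ∧ dist y₂ y₃ = dist y₁ y₂ / 2)
    (hmedian : ∀ y y₁ y₂ y₃ : Y,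
      dist y₁ y₃ = dist y₁ y₂ / 2 → dist y₂ y₃ = dist y₁ y₂ / 2 →
      (1 / 2) * dist y₁ y₂ ^ 2 ≤ dist y y₁ ^ 2 + dist y y₂ ^ 2 - 2 * dist y y₃ ^ 2)
    (μ : Measure Y) [IsFiniteMeasure μ] (y₀ : Y) {R m : ℝ} (hR : 0 < R) (hm : 0 < m)
    (hsupp : μ (Metric.closedBall y₀ R)ᶜ = 0)
    (hmass : ENNReal.ofReal m ≤ μ Set.univ)
    (hint : ∀ y : Y, Integrable (fun w => dist y w ^ 2) μ)
    (p : Y) (hp : IsMinOn (fun y => ∫ w, dist y w ^ 2 ∂μ) Set.univ p) :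
    dist p y₀ ≤ R := by
  have hμ : m ≤ (μ Set.univ).toReal := mass_le_toReal μ hm.le hmass
  set D := dist p y₀ with hDdef
  set μT := (μ Set.univ).toReal with hμT
  -- dyadic convexity sequence
  have seq : ∀ n : ℕ, ∃ z : Y, dist p z = ((2:ℝ)^n)⁻¹ * D ∧ ∀ w : Y,
      dist z w ^ 2 ≤ (1 - ((2:ℝ)^n)⁻¹) * dist p w ^ 2 + ((2:ℝ)^n)⁻¹ * dist y₀ w ^ 2
        - ((2:ℝ)^n)⁻¹ * (1 - ((2:ℝ)^n)⁻¹) * D ^ 2 := by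
    intro n
    induction n with
    | zero => exact ⟨y₀, by simp [hDdef], fun w => by simp⟩
    | succ n ih =>
      obtain ⟨z, hz1, hz2⟩ := ih
      obtain ⟨c, hc1, hc2⟩ := hmid p z
      have hl : ((2:ℝ)^(n+1))⁻¹ = ((2:ℝ)^n)⁻¹ / 2 := by
        rw [pow_succ]
        have : ((2:ℝ)^n) ≠ 0 := by positivity
        field_simp
      refine ⟨c, by rw [hc1, hz1, hl]; ring, fun w => ?_⟩
      have hmed := hmedian w p z c hc1 hc2
      rw [hz1] at hmed
      have h2 := hz2 w
      rw [hl]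
      have hd1 : dist w p = dist p w := dist_comm w p
      have hd2 : dist w z = dist z w := dist_comm w z
      have hd3 : dist w c = dist c w := dist_comm w c
      rw [hd1, hd2, hd3] at hmed
      nlinarith [hmed, h2]
  have hQp : 0 ≤ ∫ w, dist p w ^ 2 ∂μ := integral_nonneg fun w => by positivity
  have hQ0 : ∫ w, dist y₀ w ^ 2 ∂μ ≤ μT * R ^ 2 := by
    have hball : ∀ᵐ w ∂μ, w ∈ Metric.closedBall y₀ R := by
      rw [ae_iff]
      exact hsupp
    have : ∫ w, dist y₀ w ^ 2 ∂μ ≤ ∫ _w, (R:ℝ) ^ 2 ∂μ := by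
      refine integral_mono_ae (hint y₀) (integrable_const _) ?_
      filter_upwards [hball] with w hw
      have h1 : dist y₀ w ≤ R := by rw [dist_comm]; exact hw
      nlinarith [dist_nonneg (x := y₀) (y := w)]
    rw [integral_const, smul_eq_mul, measureReal_def, ← hμT] at this
    linarith
  have key : ∀ n : ℕ, (1 - ((2:ℝ)^n)⁻¹) * (μT * D ^ 2) ≤ μT * R ^ 2 := by
    intro n
    obtain ⟨z, hz1, hz2⟩ := seq n
    have hl0 : (0:ℝ) < ((2:ℝ)^n)⁻¹ := by positivity
    set l : ℝ := ((2:ℝ)^n)⁻¹ with hldef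
    have i1 : Integrable (fun w => (1 - l) * dist p w ^ 2) μ := (hint p).const_mul _
    have i2 : Integrable (fun w => l * dist y₀ w ^ 2) μ := (hint y₀).const_mul _
    have i12 : Integrable (fun w => (1 - l) * dist p w ^ 2 + l * dist y₀ w ^ 2) μ := i1.add i2
    have i3 : Integrable
        (fun w => (1 - l) * dist p w ^ 2 + l * dist y₀ w ^ 2 - l * (1 - l) * D ^ 2) μ :=
      i12.sub (integrable_const _)
    have hQz : ∫ w, dist z w ^ 2 ∂μ
        ≤ (1 - l) * ∫ w, dist p w ^ 2 ∂μ + l * ∫ w, dist y₀ w ^ 2 ∂μ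
          - μT * (l * (1 - l) * D ^ 2) := by
      have h := integral_mono (hint z) i3 hz2
      rwa [integral_sub i12 (integrable_const _), integral_add i1 i2,
        integral_const_mul, integral_const_mul, integral_const, smul_eq_mul] at h
    have hmin : ∫ w, dist p w ^ 2 ∂μ ≤ ∫ w, dist z w ^ 2 ∂μ := hp (Set.mem_univ z)
    have h5 : l * ((∫ w, dist p w ^ 2 ∂μ) + (1 - l) * (μT * D ^ 2))
        ≤ l * ∫ w, dist y₀ w ^ 2 ∂μ := by nlinarith [hQz, hmin]
    have h6 : (∫ w, dist p w ^ 2 ∂μ) + (1 - l) * (μT * D ^ 2)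
        ≤ ∫ w, dist y₀ w ^ 2 ∂μ := le_of_mul_le_mul_left h5 hl0
    linarith
  have hlim : Tendsto (fun n : ℕ => (1 - ((2:ℝ)^n)⁻¹) * (μT * D ^ 2)) atTop
      (nhds (μT * D ^ 2)) := by
    have h0 : Tendsto (fun n : ℕ => ((2:ℝ)^n)⁻¹) atTop (nhds 0) := by
      simpa [inv_pow] using
        tendsto_pow_atTop_nhds_zero_of_lt_one (by norm_num : (0:ℝ) ≤ 2⁻¹)
          (by norm_num : (2:ℝ)⁻¹ < 1)
    have h1 : Tendsto (fun n : ℕ => ((1:ℝ) - ((2:ℝ)^n)⁻¹)) atTop (nhds (1 - 0)) :=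
      tendsto_const_nhds.sub h0
    have h2 : Tendsto (fun n : ℕ => ((1:ℝ) - ((2:ℝ)^n)⁻¹) * (μT * D ^ 2)) atTop
        (nhds ((1 - 0) * (μT * D ^ 2))) := h1.mul tendsto_const_nhds
    simpa using h2
  have hfin : μT * D ^ 2 ≤ μT * R ^ 2 := le_of_tendsto' hlim key
  have hμT0 : 0 < μT := lt_of_lt_of_le hm hμ
  have hD2 : D ^ 2 ≤ R ^ 2 := le_of_mul_le_mul_left hfin hμT0
  have hD0 : 0 ≤ D := dist_nonneg
  nlinarith [hD2, hD0, hR]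

private lemma tv_int_bound {Y : Type*} [MeasurableSpace Y]
    (μ₁ μ₂ : Measure Y) [IsFiniteMeasure μ₁] [IsFiniteMeasure μ₂]
    {B : Set Y} (hB : MeasurableSet B) (h1 : μ₁ Bᶜ = 0) (h2 : μ₂ Bᶜ = 0)
    {f : Y → ℝ} (hfm : StronglyMeasurable f)
    {C ε : ℝ} (hC : 0 ≤ C) (hε : 0 ≤ ε) (hfC : ∀ w ∈ B, |f w| ≤ C)
    (hi1 : Integrable f μ₁) (hi2 : Integrable f μ₂)
    (htv : (μ₁.toSignedMeasure - μ₂.toSignedMeasure).totalVariation Set.univ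
      ≤ ENNReal.ofReal ε) :
    (∫ w, f w ∂μ₁) - ∫ w, f w ∂μ₂ ≤ ε * C := by
  set s : SignedMeasure Y := μ₁.toSignedMeasure - μ₂.toSignedMeasure with hs
  set νp := s.toJordanDecomposition.posPart with hνp
  set νn := s.toJordanDecomposition.negPart with hνn
  have hkey : ∀ ⦃A : Set Y⦄, MeasurableSet A → μ₁ A + νn A = μ₂ A + νp A := by
    intro A hA
    have h := s.toSignedMeasure_toJordanDecomposition
    have h' := congrArg (fun v : SignedMeasure Y => v A) h
    simp only [JordanDecomposition.toSignedMeasure, VectorMeasure.sub_apply, hs] at h'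
    rw [Measure.toSignedMeasure_apply_measurable hA,
      Measure.toSignedMeasure_apply_measurable hA,
      Measure.toSignedMeasure_apply_measurable hA,
      Measure.toSignedMeasure_apply_measurable hA] at h'
    refine (ENNReal.toReal_eq_toReal_iff' (by finiteness) (by finiteness)).mp ?_
    rw [ENNReal.toReal_add (measure_ne_top _ _) (measure_ne_top _ _),
      ENNReal.toReal_add (measure_ne_top _ _) (measure_ne_top _ _)]
    simp only [← hs, ← hνp, ← hνn, measureReal_def] at h'
    linarith
  obtain ⟨E, hE, hEp, hEn⟩ := s.toJordanDecomposition.mutuallySingular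
  have hνpB : νp Bᶜ = 0 := by
    have hS : νp (Bᶜ ∩ Eᶜ) = 0 := by
      have h := hkey (hB.compl.inter hE.compl)
      have l1 : μ₁ (Bᶜ ∩ Eᶜ) = 0 := measure_mono_null Set.inter_subset_left h1
      have l2 : μ₂ (Bᶜ ∩ Eᶜ) = 0 := measure_mono_null Set.inter_subset_left h2
      have l3 : νn (Bᶜ ∩ Eᶜ) = 0 := measure_mono_null Set.inter_subset_right hEn
      rw [l1, l2, l3, zero_add, zero_add] at h
      exact h.symm
    have hsub : Bᶜ ⊆ (Bᶜ ∩ Eᶜ) ∪ E := by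
      intro x hx
      by_cases hxE : x ∈ E <;> simp [hx, hxE]
    exact measure_mono_null hsub (measure_union_null hS hEp)
  have hνnB : νn Bᶜ = 0 := by
    have hS : νn (Bᶜ ∩ E) = 0 := by
      have h := hkey (hB.compl.inter hE)
      have l1 : μ₁ (Bᶜ ∩ E) = 0 := measure_mono_null Set.inter_subset_left h1
      have l2 : μ₂ (Bᶜ ∩ E) = 0 := measure_mono_null Set.inter_subset_left h2
      have l3 : νp (Bᶜ ∩ E) = 0 := measure_mono_null Set.inter_subset_right hEp
      rw [l1, l2, l3, zero_add, add_zero] at h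
      exact h
    have hsub : Bᶜ ⊆ (Bᶜ ∩ E) ∪ Eᶜ := by
      intro x hx
      by_cases hxE : x ∈ E <;> simp [hx, hxE]
    exact measure_mono_null hsub (measure_union_null hS hEn)
  have haep : ∀ᵐ w ∂νp, ‖f w‖ ≤ C := by
    have hb : ∀ᵐ w ∂νp, w ∈ B := by rw [ae_iff]; exact hνpB
    filter_upwards [hb] with w hw
    rw [Real.norm_eq_abs]; exact hfC w hw
  have haen : ∀ᵐ w ∂νn, ‖f w‖ ≤ C := by
    have hb : ∀ᵐ w ∂νn, w ∈ B := by rw [ae_iff]; exact hνnB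
    filter_upwards [hb] with w hw
    rw [Real.norm_eq_abs]; exact hfC w hw
  have hip : Integrable f νp :=
    Integrable.mono' (integrable_const C) hfm.aestronglyMeasurable haep
  have hin : Integrable f νn :=
    Integrable.mono' (integrable_const C) hfm.aestronglyMeasurable haen
  have hEqMeas : μ₁ + νn = μ₂ + νp :=
    Measure.ext fun A hA => by
      rw [Measure.add_apply, Measure.add_apply]; exact hkey hA
  have hintEq : (∫ w, f w ∂μ₁) + ∫ w, f w ∂νn = (∫ w, f w ∂μ₂) + ∫ w, f w ∂νp := by
    rw [← integral_add_measure hi1 hin, ← integral_add_measure hi2 hip, hEqMeas]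
  have hbp : |∫ w, f w ∂νp| ≤ C * (νp Set.univ).toReal := by
    have := norm_integral_le_of_norm_le_const (μ := νp) haep
    rwa [Real.norm_eq_abs] at this
  have hbn : |∫ w, f w ∂νn| ≤ C * (νn Set.univ).toReal := by
    have := norm_integral_le_of_norm_le_const (μ := νn) haen
    rwa [Real.norm_eq_abs] at this
  have hsum : (νp Set.univ).toReal + (νn Set.univ).toReal ≤ ε := by
    have hle : νp Set.univ + νn Set.univ ≤ ENNReal.ofReal ε := by
      have : s.totalVariation Set.univ = νp Set.univ + νn Set.univ := by
        rw [SignedMeasure.totalVariation, Measure.add_apply]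
      rw [← this]
      exact htv
    calc (νp Set.univ).toReal + (νn Set.univ).toReal
        = (νp Set.univ + νn Set.univ).toReal :=
          (ENNReal.toReal_add (measure_ne_top _ _) (measure_ne_top _ _)).symm
      _ ≤ ε := ENNReal.toReal_le_of_le_ofReal hε hle
  have hmul : C * ((νp Set.univ).toReal + (νn Set.univ).toReal) ≤ C * ε :=
    mul_le_mul_of_nonneg_left hsum hC
  nlinarith [le_abs_self (∫ w, f w ∂νp), neg_abs_le (∫ w, f w ∂νn), hbp, hbn]

/-- Let `Y` be a proper CAT(0) space (encoded by midpoints and the median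
inequality) and `μ₁, μ₂` positive finite Borel measures supported in a ball `B(y₀,R)`,
of total mass at least `m > 0`, with total variation distance `‖μ₁ - μ₂‖ ≤ ε`. Then
their centers of mass (the unique minimizers `p₁, p₂` of `Q_{μᵢ}(y) = ∫ d(y,w)² dμᵢ`)
satisfy `d(p₁,p₂) ≤ 4 ε R / m`. -/
theorem stmt_3 {Y : Type*} [MetricSpace Y] [ProperSpace Y]
    [MeasurableSpace Y] [BorelSpace Y]
    (hmid : ∀ y₁ y₂ : Y, ∃ y₃ : Y,
      dist y₁ y₃ = dist y₁ y₂ / 2 ∧ dist y₂ y₃ = dist y₁ y₂ / 2)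
    (hmedian : ∀ y y₁ y₂ y₃ : Y,
      dist y₁ y₃ = dist y₁ y₂ / 2 → dist y₂ y₃ = dist y₁ y₂ / 2 →
      (1 / 2) * dist y₁ y₂ ^ 2 ≤ dist y y₁ ^ 2 + dist y y₂ ^ 2 - 2 * dist y y₃ ^ 2)
    (μ₁ μ₂ : Measure Y) [IsFiniteMeasure μ₁] [IsFiniteMeasure μ₂]
    (y₀ : Y) (R m ε : ℝ) (hR : 0 < R) (hm : 0 < m) (hε : 0 ≤ ε)
    (hsupp₁ : μ₁ (Metric.closedBall y₀ R)ᶜ = 0)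
    (hsupp₂ : μ₂ (Metric.closedBall y₀ R)ᶜ = 0)
    (hmass₁ : ENNReal.ofReal m ≤ μ₁ Set.univ)
    (hmass₂ : ENNReal.ofReal m ≤ μ₂ Set.univ)
    (hint₁ : ∀ y : Y, Integrable (fun w => dist y w ^ 2) μ₁)
    (hint₂ : ∀ y : Y, Integrable (fun w => dist y w ^ 2) μ₂)
    (htv : (μ₁.toSignedMeasure - μ₂.toSignedMeasure).totalVariation Set.univ
      ≤ ENNReal.ofReal ε)
    (p₁ p₂ : Y)
    (hp₁ : IsMinOn (fun y => ∫ w, dist y w ^ 2 ∂μ₁) Set.univ p₁)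
    (hp₂ : IsMinOn (fun y => ∫ w, dist y w ^ 2 ∂μ₂) Set.univ p₂) :
    dist p₁ p₂ ≤ 4 * ε * R / m := by
  set d := dist p₁ p₂ with hd
  have hd0 : 0 ≤ d := dist_nonneg
  rcases eq_or_lt_of_le hd0 with hd0' | hd0'
  · rw [← hd0']
    positivity
  -- both centers lie in the ball
  have hball₁ : dist p₁ y₀ ≤ R :=
    center_in_ball hmid hmedian μ₁ y₀ hR hm hsupp₁ hmass₁ hint₁ p₁ hp₁
  have hball₂ : dist p₂ y₀ ≤ R :=
    center_in_ball hmid hmedian μ₂ y₀ hR hm hsupp₂ hmass₂ hint₂ p₂ hp₂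
  -- variance inequalities
  have hv₁ : m / 2 * d ^ 2 ≤ (∫ w, dist p₂ w ^ 2 ∂μ₁) - ∫ w, dist p₁ w ^ 2 ∂μ₁ := by
    have := variance_ineq hmid hmedian μ₁ hm.le hmass₁ hint₁ p₁ hp₁ p₂
    simpa [hd] using this
  have hv₂ : m / 2 * d ^ 2 ≤ (∫ w, dist p₁ w ^ 2 ∂μ₂) - ∫ w, dist p₂ w ^ 2 ∂μ₂ := by
    have := variance_ineq hmid hmedian μ₂ hm.le hmass₂ hint₂ p₂ hp₂ p₁
    simpa [hd, dist_comm p₂ p₁] using this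
  -- total variation bound on the function f w = dist p₂ w ^ 2 - dist p₁ w ^ 2
  set f : Y → ℝ := fun w => dist p₂ w ^ 2 - dist p₁ w ^ 2 with hf
  have hfm : StronglyMeasurable f := by
    have hcont : Continuous f :=
      ((continuous_const.dist continuous_id).pow 2).sub
        ((continuous_const.dist continuous_id).pow 2)
    exact hcont.stronglyMeasurable
  have hfC : ∀ w ∈ Metric.closedBall y₀ R, |f w| ≤ d * (4 * R) := by
    intro w hw
    have hwball : dist w y₀ ≤ R := Metric.mem_closedBall.mp hw
    have h1 : dist p₁ w ≤ 2 * R := by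
      have := dist_triangle p₁ y₀ w
      have : dist y₀ w ≤ R := by rw [dist_comm]; exact hwball
      calc dist p₁ w ≤ dist p₁ y₀ + dist y₀ w := dist_triangle p₁ y₀ w
        _ ≤ R + R := add_le_add hball₁ this
        _ = 2 * R := by ring
    have h2 : dist p₂ w ≤ 2 * R := by
      have hy : dist y₀ w ≤ R := by rw [dist_comm]; exact hwball
      calc dist p₂ w ≤ dist p₂ y₀ + dist y₀ w := dist_triangle p₂ y₀ w
        _ ≤ R + R := add_le_add hball₂ hy
        _ = 2 * R := by ring
    have h3 : |dist p₂ w - dist p₁ w| ≤ d := by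
      have := abs_dist_sub_le p₂ p₁ w
      rwa [dist_comm p₂ p₁] at this
    have hfw : f w = (dist p₂ w - dist p₁ w) * (dist p₂ w + dist p₁ w) := by
      simp only [hf]; ring
    rw [hfw, abs_mul, abs_of_nonneg (by positivity : (0:ℝ) ≤ dist p₂ w + dist p₁ w)]
    calc |dist p₂ w - dist p₁ w| * (dist p₂ w + dist p₁ w)
        ≤ d * (2 * R + 2 * R) := by
          apply mul_le_mul h3 (add_le_add h2 h1) (by positivity) hd0
      _ = d * (4 * R) := by ring
  have hi1 : Integrable f μ₁ := (hint₁ p₂).sub (hint₁ p₁)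
  have hi2 : Integrable f μ₂ := (hint₂ p₂).sub (hint₂ p₁)
  have htvb : (∫ w, f w ∂μ₁) - ∫ w, f w ∂μ₂ ≤ ε * (d * (4 * R)) :=
    tv_int_bound μ₁ μ₂ Metric.isClosed_closedBall.measurableSet hsupp₁ hsupp₂ hfm
      (by positivity) hε hfC hi1 hi2 htv
  have hsplit₁ : ∫ w, f w ∂μ₁ = (∫ w, dist p₂ w ^ 2 ∂μ₁) - ∫ w, dist p₁ w ^ 2 ∂μ₁ :=
    integral_sub (hint₁ p₂) (hint₁ p₁)
  have hsplit₂ : ∫ w, f w ∂μ₂ = (∫ w, dist p₂ w ^ 2 ∂μ₂) - ∫ w, dist p₁ w ^ 2 ∂μ₂ :=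
    integral_sub (hint₂ p₂) (hint₂ p₁)
  rw [hsplit₁, hsplit₂] at htvb
  -- combine: m * d ^ 2 ≤ 4 * ε * R * d
  have hcomb : m * d ^ 2 ≤ 4 * ε * R * d := by nlinarith [hv₁, hv₂, htvb]
  rw [le_div_iff₀ hm]
  nlinarith [hcomb, hd0']
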